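/- Let p̃, q̃ be integers with p̃ ≠ 0 and q̃ ≥ 97·|p̃|, and let u be any complex root of the quartic equation u⁴ + 8u² − 12·i·u − 4 = 0. Then every complex number t with |t − c(u)| < 51·|p̃|³/q̃ satisfies Im(t) > 0; i.e., each asymptotic disc is contained in the open upper half-plane and does not meet the real axis. -/

import Mathlib

/-- The center `c(u) = i q̃² + u p̃ q̃ − ((u + i u²)/2) p̃²` of the asymptotic disc
associated with a root `u` of the quartic `u⁴ + 8u² − 12iu − 4 = 0`. -/
noncomputable def discCenter (p' q' : ℤ) (u : ℂ) : ℂ :=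
  Complex.I * (q' : ℂ) ^ 2 + u * (p' : ℂ) * (q' : ℂ)
    - ((u + Complex.I * u ^ 2) / 2) * (p' : ℂ) ^ 2

/-- For integers `p̃ ≠ 0`, `q̃ ≥ 97|p̃|` and any root `u` of `u⁴ + 8u² − 12iu − 4 = 0`,
every point of the open disc of radius `51|p̃|³/q̃` centered at `c(u)` has positive
imaginary part. -/
theorem stmt_11 (p' q' : ℤ) (hp : p' ≠ 0) (hq : 97 * |p'| ≤ q') (u : ℂ)
    (hu : u ^ 4 + 8 * u ^ 2 - 12 * Complex.I * u - 4 = 0) :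
    ∀ t : ℂ, ‖t - discCenter p' q' u‖ < 51 * |(p' : ℝ)| ^ 3 / (q' : ℝ) →
      0 < t.im := by
  intro t ht
  set P : ℝ := |(p' : ℝ)| with hPdef
  set Q : ℝ := (q' : ℝ) with hQdef
  have hP1 : (1 : ℝ) ≤ P := by
    have h1 : (1 : ℤ) ≤ |p'| := Int.one_le_abs hp
    have : ((1 : ℤ) : ℝ) ≤ ((|p'| : ℤ) : ℝ) := by exact_mod_cast h1
    simpa [hPdef, Int.cast_abs] using this
  have hQ97 : 97 * P ≤ Q := by
    have : ((97 * |p'| : ℤ) : ℝ) ≤ ((q' : ℤ) : ℝ) := by exact_mod_cast hq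
    simpa [hPdef, hQdef, Int.cast_abs] using this
  have hQpos : 0 < Q := by nlinarith
  clear_value P Q
  -- bound |u| ≤ 4
  set A : ℝ := ‖u‖ with hAdef
  have hA0 : 0 ≤ A := norm_nonneg u
  have h4 : u ^ 4 = 4 + 12 * Complex.I * u + -(8 * u ^ 2) := by linear_combination hu
  have hAbound : A ^ 4 ≤ 4 + 12 * A + 8 * A ^ 2 := by
    have h1 : A ^ 4 = ‖u ^ 4‖ := by rw [norm_pow]
    have h2 : ‖4 + 12 * Complex.I * u + -(8 * u ^ 2)‖
        ≤ ‖(4 : ℂ)‖ + ‖12 * Complex.I * u‖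
          + ‖-(8 * u ^ 2)‖ := by
      exact (norm_add_le _ _).trans
        (add_le_add (norm_add_le _ _) le_rfl)
    have h3 : ‖(4 : ℂ)‖ = 4 := by norm_num
    have h4' : ‖12 * Complex.I * u‖ = 12 * A := by
      rw [norm_mul, norm_mul, Complex.norm_I]
      norm_num [hAdef]
    have h5 : ‖-(8 * u ^ 2)‖ = 8 * A ^ 2 := by
      rw [norm_neg, norm_mul, norm_pow]
      norm_num [hAdef]
    rw [h1, h4]
    rw [h3, h4', h5] at h2
    exact h2
  have hA4 : A ≤ 4 := by nlinarith [sq_nonneg A, sq_nonneg (A - 4), sq_nonneg (A + 1)]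
  clear_value A
  -- decompose t
  set z : ℂ := u * (p' : ℂ) * (q' : ℂ) - ((u + Complex.I * u ^ 2) / 2) * (p' : ℂ) ^ 2 with hzdef
  have hkey : t = (t - discCenter p' q' u) + Complex.I * (q' : ℂ) ^ 2 + z := by
    simp only [discCenter, hzdef]; ring
  -- bound |z|
  have habsP : ‖((p' : ℤ) : ℂ)‖ = P := by
    simp [hPdef]
  have habsQ : ‖((q' : ℤ) : ℂ)‖ = Q := by
    rw [show ((q' : ℤ) : ℂ) = ((Q : ℝ) : ℂ) by rw [hQdef]; push_cast; ring,
      Complex.norm_real, Real.norm_of_nonneg hQpos.le]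
  have hPQ : (0 : ℝ) ≤ P * Q := by positivity
  have hzbound : ‖z‖ ≤ 4 * P * Q + 10 * P ^ 2 := by
    have h1 : ‖z‖ ≤ ‖u * (p' : ℂ) * (q' : ℂ)‖ +
        ‖((u + Complex.I * u ^ 2) / 2) * (p' : ℂ) ^ 2‖ := by
      rw [hzdef]
      have := norm_sub_le (u * (p' : ℂ) * (q' : ℂ))
        (((u + Complex.I * u ^ 2) / 2) * (p' : ℂ) ^ 2)
      simpa only using this
    have h2 : ‖u * (p' : ℂ) * (q' : ℂ)‖ = A * P * Q := by
      rw [norm_mul, norm_mul, habsP, habsQ, ← hAdef]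
    have h3 : ‖((u + Complex.I * u ^ 2) / 2) * (p' : ℂ) ^ 2‖
        ≤ ((A + A ^ 2) / 2) * P ^ 2 := by
      rw [norm_mul, norm_pow, habsP, norm_div]
      have hnum : ‖u + Complex.I * u ^ 2‖ ≤ A + A ^ 2 := by
        calc ‖u + Complex.I * u ^ 2‖
            ≤ ‖u‖ + ‖Complex.I * u ^ 2‖ := norm_add_le _ _
          _ = A + A ^ 2 := by
              rw [norm_mul, norm_pow, Complex.norm_I, one_mul, ← hAdef]
      have h2' : ‖(2 : ℂ)‖ = 2 := by norm_num
      rw [h2']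
      exact mul_le_mul_of_nonneg_right (by linarith) (sq_nonneg P)
    have hA2 : A ^ 2 ≤ 16 := by nlinarith
    have hbig : A * P * Q ≤ 4 * (P * Q) := by
      have := mul_le_mul_of_nonneg_right hA4 hPQ
      nlinarith
    have hsmall : ((A + A ^ 2) / 2) * P ^ 2 ≤ 10 * P ^ 2 := by
      nlinarith [sq_nonneg P]
    nlinarith
  -- imaginary part of t
  have hIm : (Complex.I * ((q' : ℤ) : ℂ) ^ 2).im = Q ^ 2 := by
    rw [show ((q' : ℤ) : ℂ) = ((Q : ℝ) : ℂ) by rw [hQdef]; push_cast; ring]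
    simp [Complex.mul_im, ← Complex.ofReal_pow]
  clear_value z
  have htim : t.im = (t - discCenter p' q' u).im + Q ^ 2 + z.im := by
    conv_lhs => rw [hkey]
    simp only [Complex.add_im]
    rw [hIm]
  have hd : ‖t - discCenter p' q' u‖ * Q < 51 * P ^ 3 := by
    have := (lt_div_iff₀ hQpos).mp ht
    linarith
  have him1 : -(‖t - discCenter p' q' u‖) ≤ (t - discCenter p' q' u).im :=
    (abs_le.mp (Complex.abs_im_le_norm _)).1
  have him2 : -(‖z‖) ≤ z.im :=
    (abs_le.mp (Complex.abs_im_le_norm _)).1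
  have hPnn : (0 : ℝ) ≤ P := by linarith
  have e1 : -(51 * P ^ 3) < Q * (t - discCenter p' q' u).im := by
    have h := mul_le_mul_of_nonneg_left him1 hQpos.le
    linarith
  have e2 : -(4 * P * Q ^ 2 + 10 * P ^ 2 * Q) ≤ Q * z.im := by
    have h := mul_le_mul_of_nonneg_left him2 hQpos.le
    have h2 := mul_le_mul_of_nonneg_left hzbound hQpos.le
    linarith
  have e3 : 4 * P * Q ^ 2 + 10 * P ^ 2 * Q + 51 * P ^ 3 < Q ^ 3 := by
    have a1 : 97 * P * (Q * Q) ≤ Q * (Q * Q) :=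
      mul_le_mul_of_nonneg_right hQ97 (mul_nonneg hQpos.le hQpos.le)
    have a2 : 97 * P * (P * Q) ≤ Q * (P * Q) :=
      mul_le_mul_of_nonneg_right hQ97 (mul_nonneg hPnn hQpos.le)
    have a3 : 97 * P * (P * P) ≤ Q * (P * P) :=
      mul_le_mul_of_nonneg_right hQ97 (mul_nonneg hPnn hPnn)
    have hP3 : (1 : ℝ) ≤ P * (P * P) := by nlinarith
    linarith [a1, a2, a3, hP3]
  have hQt : 0 < Q * t.im := by
    rw [htim]
    have hexp : Q * ((t - discCenter p' q' u).im + Q ^ 2 + z.im)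
        = Q * (t - discCenter p' q' u).im + Q ^ 3 + Q * z.im := by ring
    rw [hexp]
    linarith [e1, e2, e3]
  by_contra hle
  push_neg at hle
  linarith [mul_nonpos_of_nonneg_of_nonpos hQpos.le hle]
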